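/- If a policy π satisfies π(s) ∈ argmax_a Q^π(s,a) for all states s, where Q^π is the Q-function of π in a finite discounted MDP, then Q^π is a fixed point of the Bellman optimality operator, i.e., Q^π = Q*, and π is an optimal policy. -/
import Mathlib


open Finset

/-- If a policy π is greedy with respect to its own Q-function, then Q^π is the
fixed point of the Bellman optimality operator and π is optimal. -/
theorem greedy_policy_optimal
    {S A : Type*} [Fintype S] [Fintype A] [Nonempty S] [Nonempty A]
    (p : S → A → S → ℝ) (hp_nonneg : ∀ s a s', 0 ≤ p s a s')
    (hp_sum : ∀ s a, ∑ s', p s a s' = 1)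
    (r : S → ℝ) (γ : ℝ) (hγ0 : 0 ≤ γ) (hγ1 : γ < 1)
    (π : S → A) (Qpi : S → A → ℝ)
    (hQpi : ∀ s a, Qpi s a = ∑ s', p s a s' * (r s' + γ * Qpi s' (π s')))
    (hgreedy : ∀ s a, Qpi s a ≤ Qpi s (π s))
    (Qstar : S → A → ℝ)
    (hQstar : ∀ s a, Qstar s a = ∑ s', p s a s' * (r s' + γ * ⨆ a', Qstar s' a')) :
    Qpi = Qstar ∧
    ∀ (π' : S → A) (Qpi' : S → A → ℝ),
      (∀ s a, Qpi' s a = ∑ s', p s a s' * (r s' + γ * Qpi' s' (π' s'))) →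
      ∀ s a, Qpi' s a ≤ Qpi s a := by
  classical
  have hne : (Finset.univ : Finset (S × A)).Nonempty := univ_nonempty
  have hneA : (Finset.univ : Finset A).Nonempty := univ_nonempty
  -- contraction: if D ≤ γ * sup D pointwise then D ≤ 0
  have contraction : ∀ D : S → A → ℝ,
      (∀ s a, D s a ≤ γ * (univ.sup' hne fun q : S × A => D q.1 q.2)) →
      ∀ s a, D s a ≤ 0 := by
    intro D hD s a
    set M := univ.sup' hne fun q : S × A => D q.1 q.2 with hM
    obtain ⟨q, -, hq⟩ := exists_mem_eq_sup' hne fun q : S × A => D q.1 q.2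
    have hMle : M ≤ γ * M := by
      have h := hD q.1 q.2
      rw [← hq] at h
      exact h
    have hM0 : M ≤ 0 := by nlinarith
    have h1 : D s a ≤ γ * M := hD s a
    nlinarith
  -- summing bound
  have sumle : ∀ (s : S) (a : A) (f : S → ℝ) (M : ℝ), (∀ s', f s' ≤ M) →
      (∑ s', p s a s' * (γ * f s')) ≤ γ * M := by
    intro s a f M hf
    calc (∑ s', p s a s' * (γ * f s'))
        ≤ ∑ s', p s a s' * (γ * M) := by
          apply Finset.sum_le_sum
          intro s' _
          exact mul_le_mul_of_nonneg_left (mul_le_mul_of_nonneg_left (hf s') hγ0)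
            (hp_nonneg s a s')
      _ = γ * M := by rw [← Finset.sum_mul, hp_sum]; ring
  -- sup of Qstar as finite sup'
  have hsupstar : ∀ s, (⨆ a', Qstar s a') = univ.sup' hneA (Qstar s) := by
    intro s
    apply le_antisymm
    · exact ciSup_le fun a => le_sup' _ (mem_univ a)
    · exact Finset.sup'_le _ _ fun a _ =>
        le_ciSup (Set.Finite.bddAbove (Set.finite_range _)) a
  constructor
  · -- Qpi = Qstar
    have dir1 : ∀ s a, Qstar s a - Qpi s a ≤ 0 := by
      apply contraction
      intro s a
      set M := univ.sup' hne fun q : S × A => Qstar q.1 q.2 - Qpi q.1 q.2 with hM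
      have heq : Qstar s a - Qpi s a
          = ∑ s', p s a s' * (γ * (univ.sup' hneA (Qstar s') - Qpi s' (π s'))) := by
        rw [hQstar, hQpi, ← Finset.sum_sub_distrib]
        apply Finset.sum_congr rfl
        intro s' _
        rw [hsupstar]
        ring
      rw [heq]
      apply sumle
      intro s'
      obtain ⟨a', -, ha'⟩ := exists_mem_eq_sup' hneA (Qstar s')
      rw [ha']
      have h1 : Qpi s' a' ≤ Qpi s' (π s') := hgreedy s' a'
      have h2 : Qstar s' a' - Qpi s' a' ≤ M :=
        le_sup' (f := fun q : S × A => Qstar q.1 q.2 - Qpi q.1 q.2) (mem_univ (s', a'))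
      linarith
    have dir2 : ∀ s a, Qpi s a - Qstar s a ≤ 0 := by
      apply contraction
      intro s a
      set M := univ.sup' hne fun q : S × A => Qpi q.1 q.2 - Qstar q.1 q.2 with hM
      have heq : Qpi s a - Qstar s a
          = ∑ s', p s a s' * (γ * (Qpi s' (π s') - univ.sup' hneA (Qstar s'))) := by
        rw [hQstar, hQpi, ← Finset.sum_sub_distrib]
        apply Finset.sum_congr rfl
        intro s' _
        rw [hsupstar]
        ring
      rw [heq]
      apply sumle
      intro s'
      have h1 : Qstar s' (π s') ≤ univ.sup' hneA (Qstar s') := le_sup' _ (mem_univ _)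
      have h2 : Qpi s' (π s') - Qstar s' (π s') ≤ M :=
        le_sup' (f := fun q : S × A => Qpi q.1 q.2 - Qstar q.1 q.2) (mem_univ (s', π s'))
      linarith
    funext s a
    have := dir1 s a
    have := dir2 s a
    linarith
  · -- optimality
    intro π' Qpi' hQpi' s a
    have key : ∀ s a, Qpi' s a - Qpi s a ≤ 0 := by
      apply contraction
      intro s a
      set M := univ.sup' hne fun q : S × A => Qpi' q.1 q.2 - Qpi q.1 q.2 with hM
      have heq : Qpi' s a - Qpi s a
          = ∑ s', p s a s' * (γ * (Qpi' s' (π' s') - Qpi s' (π s'))) := by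
        rw [hQpi, hQpi', ← Finset.sum_sub_distrib]
        apply Finset.sum_congr rfl
        intro s' _
        ring
      rw [heq]
      apply sumle
      intro s'
      have h1 : Qpi s' (π' s') ≤ Qpi s' (π s') := hgreedy s' (π' s')
      have h2 : Qpi' s' (π' s') - Qpi s' (π' s') ≤ M :=
        le_sup' (f := fun q : S × A => Qpi' q.1 q.2 - Qpi q.1 q.2) (mem_univ (s', π' s'))
      linarith
    linarith [key s a]
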